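/- arXiv:2602.16048 — 2 statements merged into one kernel-verified Lean document; each statement's English description precedes it below -/
import Mathlib

section
/- Let n ≥ 2 and let φ : [0, ∞) → ℝ be continuous with φ(0) = 1, φ(s) > 1 for all s > 0, and differentiable on (0, ∞) with φ'(s) = (φ(s)² − φ(s)^{4−2n})^{1/2} for all s > 0 (the profile of the n-dimensional catenoid in conformal coordinates). Then there exist constants A > 0 and C > 0 such that |e^{−s} φ(s) − A| ≤ C e^{(2−2n)s} for all s ≥ 1. In particular, e^{−s}φ(s) → A as s → ∞, i.e. φ(s) grows like A e^{s}. -/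
open Real Set


/-- **Asymptotics of the catenoid profile.** Let `n ≥ 2` and let `φ : [0,∞) → ℝ` be the
conformal profile function of the `n`-dimensional catenoid: `φ` is continuous on
`[0,∞)`, `φ 0 = 1`, `φ s > 1` for `s > 0`, and for `s > 0` it satisfies the ODE
`φ' = √(φ² − φ^{4−2n})`. Then there are constants `A > 0` and `C > 0` with
`|e^{−s} φ(s) − A| ≤ C e^{(2−2n)s}` for all `s ≥ 1`; in particular `φ(s)` grows like
`A e^s`. -/
theorem catenoid_profile_asymptotics (n : ℕ) (hn : 2 ≤ n) (φ : ℝ → ℝ)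
    (hcont : ContinuousOn φ (Set.Ici 0))
    (h0 : φ 0 = 1)
    (hgt : ∀ s : ℝ, 0 < s → 1 < φ s)
    (hode : ∀ s : ℝ, 0 < s →
      HasDerivAt φ (Real.sqrt ((φ s) ^ 2 - (φ s) ^ ((4 : ℝ) - 2 * n))) s) :
    ∃ A : ℝ, 0 < A ∧ ∃ C : ℝ, 0 < C ∧ ∀ s : ℝ, 1 ≤ s →
      |Real.exp (-s) * φ s - A| ≤ C * Real.exp (((2 : ℝ) - 2 * n) * s) := by
  have hn2 : (2:ℝ) ≤ (n:ℝ) := by exact_mod_cast hn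
  set β : ℝ := (2:ℝ) - 2*(n:ℝ) with hβdef
  have hβ2 : β ≤ -2 := by rw [hβdef]; linarith
  have hβneg : β < 0 := lt_of_le_of_lt hβ2 (by norm_num)
  set D : ℝ → ℝ := fun s => Real.sqrt ((φ s)^2 - (φ s) ^ ((4:ℝ) - 2*(n:ℝ))) with hDdef
  have hodeD : ∀ s : ℝ, 0 < s → HasDerivAt φ (D s) s := hode
  -- pointwise facts
  have hfacts : ∀ s : ℝ, 0 < s →
      0 ≤ D s ∧ D s ≤ φ s ∧ φ s - D s ≤ φ s ^ ((1:ℝ) + β) ∧ φ s ^ ((1:ℝ)+β) ≤ 1 := by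
    intro s hs
    have h1 : 1 < φ s := hgt s hs
    have hpos : 0 < φ s := lt_trans one_pos h1
    have hp1 : φ s ^ β < 1 := Real.rpow_lt_one_of_one_lt_of_neg h1 hβneg
    have hp0 : 0 < φ s ^ β := Real.rpow_pos_of_pos hpos β
    have hsplit : (φ s) ^ ((4:ℝ) - 2*(n:ℝ)) = (φ s)^2 * φ s ^ β := by
      rw [← Real.rpow_natCast (φ s) 2, ← Real.rpow_add hpos,
        show ((2:ℕ):ℝ) + β = (4:ℝ) - 2*(n:ℝ) by rw [hβdef]; push_cast; ring]
    have hD : D s = φ s * Real.sqrt (1 - φ s ^ β) := by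
      rw [hDdef]
      simp only
      rw [hsplit, ← mul_one_sub, Real.sqrt_mul (by positivity) _, Real.sqrt_sq hpos.le]
    have hsq1 : Real.sqrt (1 - φ s ^ β) ≤ 1 := Real.sqrt_le_one.mpr (by linarith)
    have hsq2 : 1 - φ s ^ β ≤ Real.sqrt (1 - φ s ^ β) := by
      nth_rewrite 1 [show (1 : ℝ) - φ s ^ β = Real.sqrt ((1 - φ s ^ β)^2) from
        (Real.sqrt_sq (by linarith)).symm]
      exact Real.sqrt_le_sqrt (by nlinarith)
    have hφβ : φ s * φ s ^ β = φ s ^ ((1:ℝ) + β) := by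
      rw [Real.rpow_add hpos, Real.rpow_one]
    refine ⟨Real.sqrt_nonneg _, ?_, ?_, ?_⟩
    · rw [hD]; nlinarith [Real.sqrt_nonneg (1 - φ s ^ β)]
    · rw [hD, ← hφβ]; nlinarith
    · exact Real.rpow_le_one_of_one_le_of_nonpos h1.le (by linarith)
  -- derivative helpers
  have hEderiv : ∀ s : ℝ, HasDerivAt (fun t => Real.exp (-t)) (-Real.exp (-s)) s := by
    intro s
    simpa [Function.comp_def] using ((Real.hasDerivAt_exp (-s)).comp s ((hasDerivAt_id s).neg))
  have hg' : ∀ s : ℝ, 0 < s →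
      HasDerivAt (fun t => Real.exp (-t) * φ t)
        (-Real.exp (-s) * φ s + Real.exp (-s) * D s) s := by
    intro s hs
    exact (hEderiv s).mul (hodeD s hs)
  have hφ1 : 1 < φ 1 := hgt 1 one_pos
  set m : ℝ := Real.exp (-1) * (φ 1 - 1) with hmdef
  have hm : 0 < m := mul_pos (Real.exp_pos _) (by linarith)
  have hIci : Ici (1:ℝ) ⊆ Ici (0:ℝ) := fun x hx => show (0:ℝ) ≤ x from le_trans zero_le_one hx
  have hexpcont : ContinuousOn (fun t : ℝ => Real.exp (-t)) (Ici (1:ℝ)) :=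
    Continuous.continuousOn (by fun_prop)
  have hgcont : ContinuousOn (fun t => Real.exp (-t) * φ t) (Ici (1:ℝ)) :=
    hexpcont.mul (hcont.mono hIci)
  have hmono1 : MonotoneOn (fun t => Real.exp (-t) * φ t - Real.exp (-t)) (Ici (1:ℝ)) := by
    apply monotoneOn_of_deriv_nonneg (convex_Ici 1)
      (hgcont.sub hexpcont)
    · intro x hx
      rw [interior_Ici] at hx
      exact ((hg' x (lt_trans one_pos hx)).sub
        (hEderiv x)).differentiableAt.differentiableWithinAt
    · intro x hx
      rw [interior_Ici] at hx
      have hx0 : (0:ℝ) < x := lt_trans one_pos hx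
      rw [((hg' x hx0).sub (hEderiv x)).deriv]
      obtain ⟨h1, h2, h3, h4⟩ := hfacts x hx0
      have hE : 0 < Real.exp (-x) := Real.exp_pos _
      nlinarith
  have hlow : ∀ s : ℝ, 1 ≤ s → m ≤ Real.exp (-s) * φ s := by
    intro s hs
    have h := hmono1 self_mem_Ici (mem_Ici.mpr hs) hs
    simp only at h
    have hE : 0 < Real.exp (-s) := Real.exp_pos _
    rw [hmdef]
    nlinarith
  set K : ℝ := m ^ ((1:ℝ) + β) with hKdef
  have hK : 0 < K := Real.rpow_pos_of_pos hm _
  set C : ℝ := K / (2*(n:ℝ) - 2) with hCdef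
  have h2n2 : (0:ℝ) < 2*(n:ℝ) - 2 := by linarith
  have hC : 0 < C := div_pos hK h2n2
  have hbound : ∀ s : ℝ, 1 ≤ s →
      Real.exp (-s) * φ s - Real.exp (-s) * D s ≤ K * Real.exp (β * s) := by
    intro s hs
    have hs0 : (0:ℝ) < s := lt_of_lt_of_le one_pos hs
    obtain ⟨h1, h2, h3, h4⟩ := hfacts s hs0
    have hE : 0 < Real.exp (-s) := Real.exp_pos _
    have hme : 0 < m * Real.exp s := by positivity
    have hφm : m * Real.exp s ≤ φ s := by
      have hl := hlow s hs
      have hh : Real.exp (-s) * Real.exp s = 1 := by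
        rw [← Real.exp_add]; simp
      nlinarith [Real.exp_pos s]
    have h5 : φ s ^ ((1:ℝ)+β) ≤ (m * Real.exp s) ^ ((1:ℝ)+β) :=
      Real.rpow_le_rpow_of_nonpos hme hφm (by linarith)
    have h6 : (m * Real.exp s) ^ ((1:ℝ)+β) = K * Real.exp (s * (1+β)) := by
      rw [Real.mul_rpow hm.le (Real.exp_pos s).le, ← Real.exp_mul, hKdef]
    calc Real.exp (-s) * φ s - Real.exp (-s) * D s
        ≤ Real.exp (-s) * (K * Real.exp (s*(1+β))) := by rw [← h6]; nlinarith
      _ = K * Real.exp (-s + s*(1+β)) := by rw [Real.exp_add]; ring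
      _ = K * Real.exp (β * s) := by ring_nf
  have hanti : AntitoneOn (fun t => Real.exp (-t) * φ t) (Ici (1:ℝ)) := by
    apply antitoneOn_of_deriv_nonpos (convex_Ici 1) hgcont
    · intro x hx; rw [interior_Ici] at hx
      exact (hg' x (lt_trans one_pos hx)).differentiableAt.differentiableWithinAt
    · intro x hx; rw [interior_Ici] at hx
      have hx0 : (0:ℝ) < x := lt_trans one_pos hx
      rw [(hg' x hx0).deriv]
      obtain ⟨h1, h2, h3, h4⟩ := hfacts x hx0
      have hE : 0 < Real.exp (-x) := Real.exp_pos _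
      nlinarith
  have hCexp : ∀ s : ℝ,
      HasDerivAt (fun t => C * Real.exp (β * t)) (C * (β * Real.exp (β*s))) s := by
    intro s
    have h1 : HasDerivAt (fun t : ℝ => β * t) β s := by
      simpa using (hasDerivAt_id s).const_mul β
    have := ((Real.hasDerivAt_exp (β*s)).comp s h1).const_mul C
    exact this.congr_deriv (by ring)
  have hCβ : C * β = -K := by
    have hCK : C * (2*(n:ℝ)-2) = K := div_mul_cancel₀ K (ne_of_gt h2n2)
    rw [hβdef]; linear_combination -hCK
  have hmono2 : MonotoneOn
      (fun t => Real.exp (-t) * φ t - C * Real.exp (β * t)) (Ici (1:ℝ)) := by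
    apply monotoneOn_of_deriv_nonneg (convex_Ici 1)
      (hgcont.sub (Continuous.continuousOn
        (by fun_prop : Continuous (fun t : ℝ => C * Real.exp (β * t)))))
    · intro x hx; rw [interior_Ici] at hx
      exact ((hg' x (lt_trans one_pos hx)).sub
        (hCexp x)).differentiableAt.differentiableWithinAt
    · intro x hx; rw [interior_Ici] at hx
      have hx0 : (0:ℝ) < x := lt_trans one_pos hx
      rw [((hg' x hx0).sub (hCexp x)).deriv]
      have hb := hbound x hx.le
      have hq : C * (β * Real.exp (β*x)) = -(K * Real.exp (β*x)) := by
        linear_combination Real.exp (β*x) * hCβ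
      linarith
  set A : ℝ := sInf ((fun t => Real.exp (-t) * φ t) '' Ici 1) with hAdef
  have hne : ((fun t => Real.exp (-t) * φ t) '' Ici 1).Nonempty :=
    ⟨_, ⟨1, self_mem_Ici, rfl⟩⟩
  have hbdd : BddBelow ((fun t => Real.exp (-t) * φ t) '' Ici 1) := by
    refine ⟨m, ?_⟩
    rintro y ⟨t, ht, rfl⟩
    exact hlow t ht
  have hmA : m ≤ A := le_csInf hne (by rintro y ⟨t, ht, rfl⟩; exact hlow t ht)
  refine ⟨A, lt_of_lt_of_le hm hmA, C, hC, ?_⟩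
  intro s hs
  have hAg : A ≤ Real.exp (-s) * φ s := csInf_le hbdd ⟨s, hs, rfl⟩
  have hup : Real.exp (-s) * φ s - C * Real.exp (β * s) ≤ A := by
    apply le_csInf hne
    rintro y ⟨t, ht, rfl⟩
    simp only
    rcases le_total t s with h | h
    · have hh := hanti (mem_Ici.mpr ht) (mem_Ici.mpr hs) h
      simp only at hh
      linarith [mul_pos hC (Real.exp_pos (β*s))]
    · have hh := hmono2 (mem_Ici.mpr hs) (mem_Ici.mpr ht) h
      simp only at hh
      linarith [mul_pos hC (Real.exp_pos (β*t))]
  rw [abs_of_nonneg (by linarith)]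
  linarith
end

section
/- Let n ≥ 3. There exist constants C > 0 and ε₀ ∈ (0,1) such that for every ε ∈ (0, ε₀] the function v_ε(x) := (ε/(n−2)) ‖x‖^{2−n}, defined on the annulus {x ∈ ℝ^n : ε^{3/(3n−2)} ≤ ‖x‖ ≤ 1}, satisfies |∇v_ε(x)| ≤ 1 and the mean curvature of its graph satisfies |H[v_ε](x)| ≤ C ε³ ‖x‖^{2−3n} for every x in this annulus. -/
open Set

noncomputable section

/-- Euclidean space `ℝ^n`. -/
abbrev Euc (n : ℕ) : Type := EuclideanSpace ℝ (Fin n)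

/-- The `i`-th standard basis vector of `ℝ^n`. -/
def esingle {n : ℕ} (i : Fin n) : Euc n := EuclideanSpace.single i 1

/-- Partial derivative of `u` in the `i`-th coordinate direction at `x`. -/
def pderiv' {n : ℕ} (u : Euc n → ℝ) (i : Fin n) (x : Euc n) : ℝ :=
  fderiv ℝ u x (esingle i)

/-- Mean curvature operator of a graph:
`H[v] = div(∇v / √(1+|∇v|²)) = Σᵢ ∂ᵢ(∂ᵢv / (1+|∇v|²)^{1/2})`. -/
def graphMeanCurv {n : ℕ} (u : Euc n → ℝ) (x : Euc n) : ℝ :=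
  ∑ i : Fin n,
    pderiv' (fun y => pderiv' u i y / Real.sqrt (1 + ‖gradient u y‖ ^ 2)) i x

lemma hasFDerivAt_norm' {n : ℕ} {x : Euc n} (hx : x ≠ 0) :
    HasFDerivAt (fun y : Euc n => ‖y‖) (‖x‖⁻¹ • innerSL ℝ x) x := by
  have hnx : (0:ℝ) < ‖x‖ := norm_pos_iff.mpr hx
  have h2 : HasFDerivAt (fun y : Euc n => ‖y‖ ^ 2) (2 • innerSL ℝ x) x :=
    (hasStrictFDerivAt_norm_sq x).hasFDerivAt
  have h3 : HasFDerivAt (fun y : Euc n => Real.sqrt (‖y‖ ^ 2))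
      ((1 / (2 * Real.sqrt (‖x‖ ^ 2))) • (2 • innerSL ℝ x)) x :=
    h2.sqrt (by positivity)
  have hfun : (fun y : Euc n => Real.sqrt (‖y‖ ^ 2)) = fun y : Euc n => ‖y‖ := by
    funext y; rw [Real.sqrt_sq (norm_nonneg y)]
  rw [hfun] at h3
  refine h3.congr_fderiv ?_
  rw [Real.sqrt_sq hnx.le]
  ext w
  simp only [ContinuousLinearMap.smul_apply, smul_eq_mul, two_smul,
    ContinuousLinearMap.add_apply]
  field_simp
  ring

lemma hasFDerivAt_comp_norm {n : ℕ} {x : Euc n} (hx : x ≠ 0) {ψ : ℝ → ℝ} {d : ℝ}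
    (hψ : HasDerivAt ψ d ‖x‖) :
    HasFDerivAt (fun y : Euc n => ψ ‖y‖) ((d * ‖x‖⁻¹) • innerSL ℝ x) x := by
  have := hψ.comp_hasFDerivAt x (hasFDerivAt_norm' hx)
  rw [smul_smul] at this; exact this

lemma gradient_v {n : ℕ} (hn : 3 ≤ n) (ε : ℝ) {y : Euc n} (hy : y ≠ 0) :
    HasGradientAt (fun y : Euc n => (ε / ((n:ℝ) - 2)) * ‖y‖ ^ ((2:ℝ) - n))
      (((-ε) * ‖y‖ ^ ((2:ℝ) - n - 2)) • y) y := by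
  have hr : (0:ℝ) < ‖y‖ := norm_pos_iff.mpr hy
  have hn3 : (3:ℝ) ≤ (n:ℝ) := by exact_mod_cast hn
  have hn2 : ((n:ℝ)) - 2 ≠ 0 := by linarith
  have hχ : HasDerivAt (fun t : ℝ => (ε / ((n:ℝ) - 2)) * t ^ ((2:ℝ) - n))
      ((ε / ((n:ℝ) - 2)) * (((2:ℝ) - n) * ‖y‖ ^ ((2:ℝ) - n - 1))) ‖y‖ :=
    (Real.hasDerivAt_rpow_const (Or.inl hr.ne')).const_mul _
  have hF := hasFDerivAt_comp_norm hy hχ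
  rw [hasGradientAt_iff_hasFDerivAt]
  refine hF.congr_fderiv ?_
  symm
  ext w
  simp only [InnerProductSpace.toDual_apply_apply, ContinuousLinearMap.smul_apply,
    innerSL_apply_apply, smul_eq_mul]
  rw [real_inner_smul_left]
  have h1 : ‖y‖ ^ ((2:ℝ) - n - 1) * ‖y‖⁻¹ = ‖y‖ ^ ((2:ℝ) - n - 2) := by
    rw [← Real.rpow_neg_one ‖y‖, ← Real.rpow_add hr]; congr 1; ring
  have h2 : ε / ((n:ℝ) - 2) * ((2:ℝ) - n) = -ε := by
    field_simp; ring
  calc (-ε) * ‖y‖ ^ ((2:ℝ) - n - 2) * inner ℝ y w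
      = (ε / ((n:ℝ) - 2) * ((2:ℝ) - n)) * (‖y‖ ^ ((2:ℝ) - n - 1) * ‖y‖⁻¹) * inner ℝ y w := by
        rw [h1, h2]
    _ = ε / ((n:ℝ) - 2) * (((2:ℝ) - n) * ‖y‖ ^ ((2:ℝ) - n - 1)) * ‖y‖⁻¹ * inner ℝ y w := by
        ring

lemma curv_eq {n : ℕ} (hn : 3 ≤ n) {ε : ℝ} (hε : 0 < ε) {x : Euc n} (hx : x ≠ 0) :
    graphMeanCurv (fun y : Euc n => (ε / ((n:ℝ) - 2)) * ‖y‖ ^ ((2:ℝ) - n)) x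
      = ε ^ 3 * ((2:ℝ) - n - 1) * ‖x‖ ^ ((2:ℝ) - 3 * n)
          / Real.sqrt (1 + ε ^ 2 * ‖x‖ ^ (2 * ((2:ℝ) - n) - 2)) ^ 3 := by
  have hr : (0:ℝ) < ‖x‖ := norm_pos_iff.mpr hx
  set v : Euc n → ℝ := fun y : Euc n => (ε / ((n:ℝ) - 2)) * ‖y‖ ^ ((2:ℝ) - n) with hv
  set ψ : ℝ → ℝ := fun t => (-ε) * t ^ ((2:ℝ) - n - 2)
      / Real.sqrt (1 + ε ^ 2 * t ^ (2 * ((2:ℝ) - n) - 2)) with hψdef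
  have hpd : ∀ (i : Fin n) (y : Euc n), y ≠ 0 →
      pderiv' v i y = (-ε) * ‖y‖ ^ ((2:ℝ) - n - 2) * y i := by
    intro i y hy
    have hG := (gradient_v hn ε hy).hasFDerivAt
    rw [pderiv', hG.fderiv, InnerProductSpace.toDual_apply_apply, real_inner_smul_left]
    have : (inner ℝ y (esingle i) : ℝ) = y i := by
      simp [esingle, EuclideanSpace.inner_single_right]
    rw [this]
  have hg2 : ∀ y : Euc n, y ≠ 0 →
      ‖gradient v y‖ ^ 2 = ε ^ 2 * ‖y‖ ^ (2 * ((2:ℝ) - n) - 2) := by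
    intro y hy
    have hry : (0:ℝ) < ‖y‖ := norm_pos_iff.mpr hy
    have h1 : (‖y‖ ^ ((2:ℝ) - n - 2)) ^ 2 * ‖y‖ ^ 2 = ‖y‖ ^ (2 * ((2:ℝ) - n) - 2) := by
      rw [← Real.rpow_natCast (‖y‖ ^ ((2:ℝ) - n - 2)) 2, ← Real.rpow_natCast ‖y‖ 2,
        ← Real.rpow_mul hry.le, ← Real.rpow_add hry]
      congr 1; push_cast; ring
    rw [(gradient_v hn ε hy).gradient, norm_smul, Real.norm_eq_abs, mul_pow, sq_abs,
      show (-ε * ‖y‖ ^ ((2:ℝ) - ↑n - 2)) ^ 2 * ‖y‖ ^ 2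
        = ε ^ 2 * ((‖y‖ ^ ((2:ℝ) - ↑n - 2)) ^ 2 * ‖y‖ ^ 2) from by ring, h1]
  have hm : HasDerivAt (fun t : ℝ => 1 + ε ^ 2 * t ^ (2 * ((2:ℝ) - n) - 2))
      (ε ^ 2 * ((2 * ((2:ℝ) - n) - 2) * ‖x‖ ^ (2 * ((2:ℝ) - n) - 2 - 1))) ‖x‖ :=
    ((Real.hasDerivAt_rpow_const (Or.inl hr.ne')).const_mul _).const_add 1
  have hsq_pos : (0:ℝ) < 1 + ε ^ 2 * ‖x‖ ^ (2 * ((2:ℝ) - n) - 2) := by positivity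
  have hs_pos : (0:ℝ) < Real.sqrt (1 + ε ^ 2 * ‖x‖ ^ (2 * ((2:ℝ) - n) - 2)) :=
    Real.sqrt_pos.mpr hsq_pos
  have hnum : HasDerivAt (fun t : ℝ => (-ε) * t ^ ((2:ℝ) - n - 2))
      ((-ε) * (((2:ℝ) - n - 2) * ‖x‖ ^ ((2:ℝ) - n - 2 - 1))) ‖x‖ :=
    (Real.hasDerivAt_rpow_const (Or.inl hr.ne')).const_mul _
  have hden : HasDerivAt (fun t : ℝ => Real.sqrt (1 + ε ^ 2 * t ^ (2 * ((2:ℝ) - n) - 2)))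
      ((ε ^ 2 * ((2 * ((2:ℝ) - n) - 2) * ‖x‖ ^ (2 * ((2:ℝ) - n) - 2 - 1)))
        / (2 * Real.sqrt (1 + ε ^ 2 * ‖x‖ ^ (2 * ((2:ℝ) - n) - 2)))) ‖x‖ :=
    hm.sqrt hsq_pos.ne'
  set s : ℝ := Real.sqrt (1 + ε ^ 2 * ‖x‖ ^ (2 * ((2:ℝ) - n) - 2)) with hs
  set ψ' : ℝ := ((-ε) * (((2:ℝ) - n - 2) * ‖x‖ ^ ((2:ℝ) - n - 2 - 1)) * s
      - (-ε) * ‖x‖ ^ ((2:ℝ) - n - 2)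
        * ((ε ^ 2 * ((2 * ((2:ℝ) - n) - 2) * ‖x‖ ^ (2 * ((2:ℝ) - n) - 2 - 1))) / (2 * s)))
      / s ^ 2 with hψ'def
  have hψd : HasDerivAt ψ ψ' ‖x‖ := hnum.div hden hs_pos.ne'
  have key : ∀ i : Fin n,
      pderiv' (fun y => pderiv' v i y / Real.sqrt (1 + ‖gradient v y‖ ^ 2)) i x
        = ψ ‖x‖ + (ψ' * ‖x‖⁻¹) * (x i) ^ 2 := by
    intro i
    have hproj : HasFDerivAt (fun y : Euc n => y i)
        (EuclideanSpace.proj i : Euc n →L[ℝ] ℝ) x :=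
      (EuclideanSpace.proj (𝕜 := ℝ) i).hasFDerivAt
    have hQ : HasFDerivAt (fun y : Euc n => ψ ‖y‖ * y i)
        (ψ ‖x‖ • (EuclideanSpace.proj i : Euc n →L[ℝ] ℝ)
          + (x i) • ((ψ' * ‖x‖⁻¹) • innerSL ℝ x)) x :=
      (hasFDerivAt_comp_norm hx hψd).mul hproj
    have hev : (fun y : Euc n => pderiv' v i y / Real.sqrt (1 + ‖gradient v y‖ ^ 2))
        =ᶠ[nhds x] fun y : Euc n => ψ ‖y‖ * y i := by
      filter_upwards [isOpen_compl_singleton.mem_nhds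
        (by simpa using hx : x ∈ ({0}ᶜ : Set (Euc n)))] with y hy
      have hy0 : y ≠ 0 := hy
      rw [hpd i y hy0, hg2 y hy0, hψdef]
      ring
    rw [pderiv', hev.fderiv_eq, hQ.fderiv]
    simp only [ContinuousLinearMap.add_apply, ContinuousLinearMap.smul_apply,
      smul_eq_mul, innerSL_apply_apply]
    have h1 : (EuclideanSpace.proj i : Euc n →L[ℝ] ℝ) (esingle i) = 1 := by
      simp [esingle]
    have h2 : (inner ℝ x (esingle i) : ℝ) = x i := by
      simp [esingle, EuclideanSpace.inner_single_right]
    rw [h1, h2]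
    ring
  have hx2 : ∑ i : Fin n, (x i) ^ 2 = ‖x‖ ^ 2 := by
    have h := EuclideanSpace.norm_eq x
    rw [h, Real.sq_sqrt (by positivity)]
    congr 1; funext i; rw [Real.norm_eq_abs, sq_abs]
  have hsum : graphMeanCurv v x = (n:ℝ) * ψ ‖x‖ + ψ' * ‖x‖⁻¹ * ‖x‖ ^ 2 := by
    rw [graphMeanCurv]
    rw [Finset.sum_congr rfl fun i _ => key i]
    rw [Finset.sum_add_distrib, Finset.sum_const, ← Finset.mul_sum, hx2]
    simp [mul_comm]
  rw [hsum]
  have e1 : ‖x‖ ^ ((2:ℝ) - n - 2) = ‖x‖ ^ ((2:ℝ) - n - 2 - 1) * ‖x‖ := by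
    nth_rewrite 3 [← Real.rpow_one ‖x‖]
    rw [← Real.rpow_add hr]; congr 1; ring
  have e2 : ‖x‖ ^ (2 * ((2:ℝ) - n) - 2) = ‖x‖ ^ (2 * ((2:ℝ) - n) - 2 - 1) * ‖x‖ := by
    nth_rewrite 3 [← Real.rpow_one ‖x‖]
    rw [← Real.rpow_add hr]; congr 1; ring
  have e3 : ‖x‖ ^ ((2:ℝ) - 3 * n)
      = ‖x‖ ^ ((2:ℝ) - n - 2) * ‖x‖ ^ (2 * ((2:ℝ) - n) - 2) := by
    rw [← Real.rpow_add hr]; congr 1; ring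
  rw [e3]
  simp only [hψdef]
  rw [← hs, hψ'def]
  rw [e1, e2]
  have hrne : ‖x‖ ≠ 0 := hr.ne'
  have hsne : s ≠ 0 := hs_pos.ne'
  field_simp
  ring

/-- **Mean curvature of a Green's-function graph.** Let `n ≥ 3`. There are `C > 0` and
`ε₀ ∈ (0,1)` such that for every `ε ∈ (0, ε₀]` the function
`v_ε(x) = (ε/(n−2)) ‖x‖^{2−n}` on the annulus `ε^{3/(3n−2)} ≤ ‖x‖ ≤ 1` has
`|∇v_ε| ≤ 1` and its graph has mean curvature `|H[v_ε](x)| ≤ C ε³ ‖x‖^{2−3n}` there. -/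
theorem green_function_graph_mean_curvature (n : ℕ) (hn : 3 ≤ n) :
    ∃ C : ℝ, 0 < C ∧ ∃ ε₀ : ℝ, 0 < ε₀ ∧ ε₀ < 1 ∧
      ∀ ε : ℝ, 0 < ε → ε ≤ ε₀ →
        ∀ x : Euc n, ε ^ ((3 : ℝ) / (3 * n - 2)) ≤ ‖x‖ → ‖x‖ ≤ 1 →
          ‖gradient (fun y : Euc n =>
              (ε / ((n : ℝ) - 2)) * ‖y‖ ^ ((2 : ℝ) - n)) x‖ ≤ 1 ∧
          |graphMeanCurv (fun y : Euc n =>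
              (ε / ((n : ℝ) - 2)) * ‖y‖ ^ ((2 : ℝ) - n)) x| ≤
            C * ε ^ 3 * ‖x‖ ^ ((2 : ℝ) - 3 * n) := by
  have hn3 : (3:ℝ) ≤ (n:ℝ) := by exact_mod_cast hn
  refine ⟨n, by positivity, 1/2, by norm_num, by norm_num, ?_⟩
  intro ε hε hεle x hxlo hxhi
  have hρ : (0:ℝ) < ε ^ ((3 : ℝ) / (3 * n - 2)) := Real.rpow_pos_of_pos hε _
  have hr : (0:ℝ) < ‖x‖ := lt_of_lt_of_le hρ hxlo
  have hx0 : x ≠ 0 := by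
    intro h; rw [h] at hr; simp at hr
  have h3n2 : (0:ℝ) < 3 * (n:ℝ) - 2 := by linarith
  constructor
  · -- gradient bound
    have hgrad := (gradient_v hn ε hx0).gradient
    rw [hgrad, norm_smul, Real.norm_eq_abs, abs_mul, abs_neg, abs_of_pos hε,
      abs_of_pos (Real.rpow_pos_of_pos hr _)]
    have e1 : ‖x‖ ^ ((2:ℝ) - n - 2) * ‖x‖ = ‖x‖ ^ ((2:ℝ) - n - 1) := by
      nth_rewrite 2 [← Real.rpow_one ‖x‖]
      rw [← Real.rpow_add hr]; congr 1; ring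
    rw [mul_assoc, e1]
    have hqneg : ((2:ℝ) - n - 1) ≤ 0 := by linarith
    have step1 : ‖x‖ ^ ((2:ℝ) - n - 1) ≤ (ε ^ ((3 : ℝ) / (3 * n - 2))) ^ ((2:ℝ) - n - 1) :=
      Real.rpow_le_rpow_of_nonpos hρ hxlo hqneg
    have step2 : (ε ^ ((3 : ℝ) / (3 * n - 2))) ^ ((2:ℝ) - n - 1)
        = ε ^ ((3 : ℝ) / (3 * n - 2) * ((2:ℝ) - n - 1)) :=
      (Real.rpow_mul hε.le _ _).symm
    have step3 : ε * ε ^ ((3 : ℝ) / (3 * n - 2) * ((2:ℝ) - n - 1))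
        = ε ^ (1 + (3 : ℝ) / (3 * n - 2) * ((2:ℝ) - n - 1)) := by
      rw [Real.rpow_add hε, Real.rpow_one]
    have step4 : 1 + (3 : ℝ) / (3 * n - 2) * ((2:ℝ) - n - 1) = 1 / (3 * n - 2) := by
      field_simp
      ring
    have step5 : ε ^ ((1:ℝ) / (3 * n - 2)) ≤ 1 :=
      Real.rpow_le_one hε.le (by linarith) (by positivity)
    calc ε * ‖x‖ ^ ((2:ℝ) - n - 1)
        ≤ ε * (ε ^ ((3 : ℝ) / (3 * n - 2))) ^ ((2:ℝ) - n - 1) := by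
          exact mul_le_mul_of_nonneg_left step1 hε.le
      _ = ε ^ ((1:ℝ) / (3 * n - 2)) := by rw [step2, step3, step4]
      _ ≤ 1 := step5
  · -- curvature bound
    rw [curv_eq hn hε hx0]
    set s : ℝ := Real.sqrt (1 + ε ^ 2 * ‖x‖ ^ (2 * ((2:ℝ) - n) - 2)) with hs
    have hsq_pos : (0:ℝ) < 1 + ε ^ 2 * ‖x‖ ^ (2 * ((2:ℝ) - n) - 2) := by positivity
    have hs1 : (1:ℝ) ≤ s := by
      have h0 : (0:ℝ) ≤ ε ^ 2 * ‖x‖ ^ (2 * ((2:ℝ) - n) - 2) := by positivity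
      have h1 : Real.sqrt 1 ≤ s := Real.sqrt_le_sqrt (by linarith)
      simpa using h1
    have hs_pos : (0:ℝ) < s := lt_of_lt_of_le one_pos hs1
    have hR : (0:ℝ) < ‖x‖ ^ ((2:ℝ) - 3 * n) := Real.rpow_pos_of_pos hr _
    have habs : |ε ^ 3 * ((2:ℝ) - n - 1) * ‖x‖ ^ ((2:ℝ) - 3 * n) / s ^ 3|
        = ε ^ 3 * ((n:ℝ) - 2 + 1) * ‖x‖ ^ ((2:ℝ) - 3 * n) / s ^ 3 := by
      rw [abs_div, abs_mul, abs_mul, abs_of_pos (pow_pos hε 3), abs_of_pos hR,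
        abs_of_pos (pow_pos hs_pos 3), abs_of_neg (by linarith : (2:ℝ) - n - 1 < 0)]
      ring_nf
    rw [habs]
    have h1 : ε ^ 3 * ((n:ℝ) - 2 + 1) * ‖x‖ ^ ((2:ℝ) - 3 * n) / s ^ 3
        ≤ ε ^ 3 * ((n:ℝ) - 2 + 1) * ‖x‖ ^ ((2:ℝ) - 3 * n) :=
      div_le_self (mul_nonneg (mul_nonneg (pow_pos hε 3).le
        (by linarith : (0:ℝ) ≤ (n:ℝ) - 2 + 1)) hR.le) (one_le_pow₀ hs1)
    have h2 : ε ^ 3 * ((n:ℝ) - 2 + 1) * ‖x‖ ^ ((2:ℝ) - 3 * n)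
        ≤ (n:ℝ) * ε ^ 3 * ‖x‖ ^ ((2:ℝ) - 3 * n) := by
      have : ((n:ℝ) - 2 + 1) ≤ (n:ℝ) := by linarith
      nlinarith [pow_pos hε 3, hR]
    linarith

end
end
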